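/- Let σ > 0, μ0 ∈ ℝ^P, and let Y have independent coordinates Y_i ~ N((μ0)_i, σ²). Let ST(t,λ) = t+λ if t ≤ −λ, 0 if −λ < t < λ, t−λ if t ≥ λ. Then the risk λ ↦ Σ_{i=1}^P E[(ST(Y_i, λ) − (μ0)_i)²] is differentiable at every λ > 0, with derivative 2λ Σ_{i=1}^P P(|Y_i| > λ) − σ√(2/π) Σ_{i=1}^P [ exp(−((μ0)_i + λ)²/(2σ²)) + exp(−((μ0)_i − λ)²/(2σ²)) ]. -/

import Mathlib

open MeasureTheory ProbabilityTheory
open scoped BigOperators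

noncomputable section

/-- Soft-thresholding with threshold `λ`. -/
def softThresh (t lam : ℝ) : ℝ :=
  if t ≤ -lam then t + lam else if t < lam then 0 else t - lam

section Aux

open Real Set Filter Metric
open scoped Topology NNReal ENNReal

lemma st_lip {t a b : ℝ} (ha : 0 < a) (hb : 0 < b) :
    |softThresh t a - softThresh t b| ≤ |a - b| := by
  have h1 := le_abs_self (a - b)
  have h2 := neg_abs_le (a - b)
  unfold softThresh
  split_ifs <;> rw [abs_le] <;> constructor <;> linarith

lemma st_bound {t l : ℝ} (hl : 0 ≤ l) : |softThresh t l| ≤ |t| := by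
  have h1 := le_abs_self t
  have h2 := neg_abs_le t
  unfold softThresh
  split_ifs <;> rw [abs_le] <;> constructor <;> linarith

lemma measurable_st (l : ℝ) : Measurable (fun t => softThresh t l) := by
  unfold softThresh
  exact Measurable.ite (measurableSet_le measurable_id measurable_const)
    (measurable_id.add_const l)
    (Measurable.ite (measurableSet_lt measurable_id measurable_const) measurable_const
      (measurable_id.sub_const l))

variable {σ : ℝ} (hσ : 0 < σ) {μ : ℝ}

lemma v_ne {σ : ℝ} (hσ : 0 < σ) : (⟨σ ^ 2, sq_nonneg σ⟩ : ℝ≥0) ≠ 0 := by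
  intro h
  have := congrArg (fun x : ℝ≥0 => (x : ℝ)) h
  change σ ^ 2 = 0 at this
  nlinarith

lemma hconv {σ μ : ℝ} (hσ : 0 < σ) (g : ℝ → ℝ) :
    Integrable g (gaussianReal μ ⟨σ ^ 2, sq_nonneg σ⟩) ↔
      Integrable (fun t => gaussianPDFReal μ ⟨σ ^ 2, sq_nonneg σ⟩ t * g t) volume := by
  set v : ℝ≥0 := ⟨σ ^ 2, sq_nonneg σ⟩
  rw [gaussianReal_of_var_ne_zero _ (v_ne hσ)]
  have h1 : gaussianPDF μ v = fun x => ((Real.toNNReal (gaussianPDFReal μ v x) : ℝ≥0) : ℝ≥0∞) := rfl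
  rw [h1, integrable_withDensity_iff_integrable_coe_smul
    ((measurable_gaussianPDFReal μ v).real_toNNReal)]
  apply integrable_congr
  filter_upwards with x
  simp [NNReal.smul_def, Real.coe_toNNReal _ (gaussianPDFReal_nonneg μ v x)]

lemma hconv_int {σ μ : ℝ} (hσ : 0 < σ) (g : ℝ → ℝ) :
    ∫ t, g t ∂(gaussianReal μ ⟨σ ^ 2, sq_nonneg σ⟩) =
      ∫ t, gaussianPDFReal μ ⟨σ ^ 2, sq_nonneg σ⟩ t * g t := by
  set v : ℝ≥0 := ⟨σ ^ 2, sq_nonneg σ⟩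
  rw [gaussianReal_of_var_ne_zero _ (v_ne hσ)]
  have h1 : gaussianPDF μ v = fun x => ((Real.toNNReal (gaussianPDFReal μ v x) : ℝ≥0) : ℝ≥0∞) := rfl
  rw [h1, integral_withDensity_eq_integral_smul ((measurable_gaussianPDFReal μ v).real_toNNReal)]
  congr 1
  funext x
  simp [NNReal.smul_def, Real.coe_toNNReal _ (gaussianPDFReal_nonneg μ v x)]

lemma pdf_mul_one_add_sq_le {σ : ℝ} (hσ : 0 < σ) (μ x : ℝ) :
    gaussianPDFReal μ ⟨σ ^ 2, sq_nonneg σ⟩ x * (1 + x ^ 2) ≤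
      (Real.sqrt (2 * Real.pi * σ ^ 2))⁻¹ * (1 + 2 * μ ^ 2 + 8 * σ ^ 2) *
        Real.exp (-(1 / (4 * σ ^ 2)) * (x - μ) ^ 2) := by
  unfold gaussianPDFReal
  change (Real.sqrt (2 * Real.pi * σ ^ 2))⁻¹ * Real.exp (-(x - μ) ^ 2 / (2 * σ ^ 2)) * (1 + x ^ 2) ≤ _
  rw [show (-(1 / (4 * σ ^ 2)) * (x - μ) ^ 2 : ℝ)
      = -((1 / (4 * σ ^ 2)) * (x - μ) ^ 2) from by ring]
  have hv : (0:ℝ) < σ ^ 2 := by positivity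
  have hc : (0:ℝ) ≤ (Real.sqrt (2 * Real.pi * σ ^ 2))⁻¹ := by positivity
  set y : ℝ := (1 / (4 * σ ^ 2)) * (x - μ) ^ 2 with hy
  have hsplit : -(x - μ) ^ 2 / (2 * σ ^ 2) = (-y) + (-y) := by
    rw [hy]; field_simp; ring
  rw [hsplit, Real.exp_add]
  set E : ℝ := Real.exp (-y) with hE
  set c : ℝ := (Real.sqrt (2 * Real.pi * σ ^ 2))⁻¹
  have hynn : 0 ≤ y := by positivity
  have key : E * (1 + x ^ 2) ≤ 1 + 2 * μ ^ 2 + 8 * σ ^ 2 := by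
    rw [hE, Real.exp_neg, inv_mul_le_iff₀ (Real.exp_pos _)]
    have hexp := Real.add_one_le_exp y
    have h3 : 2 * (x - μ) ^ 2 ≤ (1 + 2 * μ ^ 2 + 8 * σ ^ 2) * y := by
      rw [hy, show (1 + 2 * μ ^ 2 + 8 * σ ^ 2) * ((1 / (4 * σ ^ 2)) * (x - μ) ^ 2)
          = ((1 + 2 * μ ^ 2 + 8 * σ ^ 2) / (4 * σ ^ 2)) * (x - μ) ^ 2 by ring]
      apply mul_le_mul_of_nonneg_right _ (sq_nonneg _)
      rw [le_div_iff₀ (by positivity)]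
      nlinarith [sq_nonneg μ, sq_nonneg σ]
    have h2 : 1 + x ^ 2 ≤ (1 + 2 * μ ^ 2 + 8 * σ ^ 2) * (1 + y) := by
      nlinarith [sq_nonneg (x - 2*μ), sq_nonneg (x - μ), sq_nonneg μ, sq_nonneg σ]
    have h4 : (1 + 2 * μ ^ 2 + 8 * σ ^ 2) * (1 + y)
        ≤ Real.exp y * (1 + 2 * μ ^ 2 + 8 * σ ^ 2) := by
      rw [mul_comm (Real.exp y) _]
      apply mul_le_mul_of_nonneg_left (by linarith) (by positivity)
    linarith
  have hEpos : 0 < E := Real.exp_pos _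
  calc c * (E * E) * (1 + x ^ 2) = (c * E) * (E * (1 + x ^ 2)) := by ring
    _ ≤ (c * E) * (1 + 2 * μ ^ 2 + 8 * σ ^ 2) := mul_le_mul_of_nonneg_left key (by positivity)
    _ = c * (1 + 2 * μ ^ 2 + 8 * σ ^ 2) * E := by ring

lemma integrable_one_add_sq {σ : ℝ} (hσ : 0 < σ) (μ : ℝ) :
    Integrable (fun x : ℝ => 1 + x ^ 2) (gaussianReal μ ⟨σ ^ 2, sq_nonneg σ⟩) := by
  rw [hconv hσ]
  have hD : Integrable (fun x : ℝ =>
      (Real.sqrt (2 * Real.pi * σ ^ 2))⁻¹ * (1 + 2 * μ ^ 2 + 8 * σ ^ 2) *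
        Real.exp (-(1 / (4 * σ ^ 2)) * (x - μ) ^ 2)) volume := by
    apply Integrable.const_mul
    exact (integrable_exp_neg_mul_sq (by positivity)).comp_sub_right μ
  apply hD.mono'
  · exact ((measurable_gaussianPDFReal _ _).mul
      ((measurable_const.add (measurable_id.pow_const 2)))).aestronglyMeasurable
  · filter_upwards with x
    rw [Real.norm_eq_abs, abs_of_nonneg (mul_nonneg (gaussianPDFReal_nonneg μ ⟨σ ^ 2, sq_nonneg σ⟩ x) (by positivity))]
    exact pdf_mul_one_add_sq_le hσ μ x

lemma integrable_of_le_one_add_sq {σ : ℝ} (hσ : 0 < σ) (μ : ℝ) {f : ℝ → ℝ} (C : ℝ)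
    (hmeas : AEStronglyMeasurable f (gaussianReal μ ⟨σ ^ 2, sq_nonneg σ⟩))
    (hbd : ∀ x, |f x| ≤ C * (1 + x ^ 2)) :
    Integrable f (gaussianReal μ ⟨σ ^ 2, sq_nonneg σ⟩) := by
  apply ((integrable_one_add_sq hσ μ).const_mul C).mono' hmeas
  filter_upwards with x
  rw [Real.norm_eq_abs]
  exact hbd x

lemma pdf_eq {σ : ℝ} (μ t : ℝ) :
    gaussianPDFReal μ ⟨σ ^ 2, sq_nonneg σ⟩ t
      = (Real.sqrt (2 * Real.pi * σ ^ 2))⁻¹ * Real.exp (-(t - μ) ^ 2 / (2 * σ ^ 2)) := by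
  unfold gaussianPDFReal
  rfl

lemma hasDerivAt_neg_v_pdf {σ : ℝ} (hσ : 0 < σ) (μ t : ℝ) :
    HasDerivAt (fun t => -σ ^ 2 * gaussianPDFReal μ ⟨σ ^ 2, sq_nonneg σ⟩ t)
      ((t - μ) * gaussianPDFReal μ ⟨σ ^ 2, sq_nonneg σ⟩ t) t := by
  have hv : (0:ℝ) < σ ^ 2 := by positivity
  have h1 : HasDerivAt (fun t : ℝ => -(t - μ) ^ 2 / (2 * σ ^ 2))
      (-(2 * (t - μ)) / (2 * σ ^ 2)) t := by
    have := (((hasDerivAt_id t).sub_const μ).pow 2).neg.div_const (2 * σ ^ 2)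
    simpa using this
  have h2 := (h1.exp.const_mul ((Real.sqrt (2 * Real.pi * σ ^ 2))⁻¹)).const_mul (-σ ^ 2)
  have heq : (fun t => -σ ^ 2 * gaussianPDFReal μ ⟨σ ^ 2, sq_nonneg σ⟩ t)
      = fun t => -σ ^ 2 * ((Real.sqrt (2 * Real.pi * σ ^ 2))⁻¹ * Real.exp (-(t - μ) ^ 2 / (2 * σ ^ 2))) := by
    funext t; rw [pdf_eq]
  rw [heq]
  refine h2.congr_deriv ?_
  rw [pdf_eq]
  field_simp

lemma tendsto_neg_v_pdf {σ : ℝ} (hσ : 0 < σ) (μ : ℝ) {l : Filter ℝ}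
    (h : Tendsto (fun t => |t - μ|) l atTop) :
    Tendsto (fun t => -σ ^ 2 * gaussianPDFReal μ ⟨σ ^ 2, sq_nonneg σ⟩ t) l (𝓝 0) := by
  have hv : (0:ℝ) < σ ^ 2 := by positivity
  have h1 : Tendsto (fun t : ℝ => -(t - μ) ^ 2 / (2 * σ ^ 2)) l atBot := by
    have h2 : Tendsto (fun t : ℝ => (t - μ) ^ 2) l atTop := by
      have := (tendsto_pow_atTop (two_ne_zero)).comp h
      refine this.congr fun t => ?_
      simp [sq_abs]
    have h3 : Tendsto (fun t : ℝ => (t - μ) ^ 2 / (2 * σ ^ 2)) l atTop :=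
      h2.atTop_div_const (by positivity)
    have := tendsto_neg_atTop_atBot.comp h3
    refine this.congr fun t => by simp [Function.comp]; ring
  have h4 : Tendsto (fun t : ℝ => Real.exp (-(t - μ) ^ 2 / (2 * σ ^ 2))) l (𝓝 0) :=
    Real.tendsto_exp_atBot.comp h1
  have h5 := (h4.const_mul ((Real.sqrt (2 * Real.pi * σ ^ 2))⁻¹)).const_mul (-σ ^ 2)
  simp only [mul_zero] at h5
  refine h5.congr fun t => ?_
  rw [pdf_eq]

lemma integrable_sub_mul_pdf {σ : ℝ} (hσ : 0 < σ) (μ : ℝ) :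
    Integrable (fun t => (t - μ) * gaussianPDFReal μ ⟨σ ^ 2, sq_nonneg σ⟩ t) volume := by
  have h1 : Integrable (fun t : ℝ => t - μ) (gaussianReal μ ⟨σ ^ 2, sq_nonneg σ⟩) := by
    apply integrable_of_le_one_add_sq hσ μ (1 + |μ|)
    · exact (measurable_id.sub_const μ).aestronglyMeasurable
    · intro x
      have h1 := abs_sub_abs_le_abs_sub x μ
      have := abs_sub (x) (μ)
      have h2 : |x - μ| ≤ |x| + |μ| := abs_sub _ _
      nlinarith [abs_nonneg x, abs_nonneg μ, sq_abs x, sq_nonneg (|x| - 1), abs_nonneg (x - μ)]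
  rw [hconv hσ] at h1
  exact h1.congr (Filter.Eventually.of_forall fun t => mul_comm _ _)

lemma tail_Iic {σ : ℝ} (hσ : 0 < σ) (μ a : ℝ) :
    ∫ t in Iic a, (t - μ) * gaussianPDFReal μ ⟨σ ^ 2, sq_nonneg σ⟩ t
      = -σ ^ 2 * gaussianPDFReal μ ⟨σ ^ 2, sq_nonneg σ⟩ a := by
  have := integral_Iic_of_hasDerivAt_of_tendsto' (a := a)
    (fun t _ => hasDerivAt_neg_v_pdf hσ μ t)
    ((integrable_sub_mul_pdf hσ μ).integrableOn)
    (tendsto_neg_v_pdf hσ μ (by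
      have h := tendsto_abs_atBot_atTop (G := ℝ)
      have h2 : Tendsto (fun t : ℝ => t - μ) atBot atBot := tendsto_atBot_add_const_right _ (-μ) tendsto_id
      exact h.comp h2))
  rw [this]; ring

lemma tail_Ioi {σ : ℝ} (hσ : 0 < σ) (μ a : ℝ) :
    ∫ t in Ioi a, (t - μ) * gaussianPDFReal μ ⟨σ ^ 2, sq_nonneg σ⟩ t
      = σ ^ 2 * gaussianPDFReal μ ⟨σ ^ 2, sq_nonneg σ⟩ a := by
  have := integral_Ioi_of_hasDerivAt_of_tendsto' (a := a)
    (fun t _ => hasDerivAt_neg_v_pdf hσ μ t)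
    ((integrable_sub_mul_pdf hσ μ).integrableOn)
    (tendsto_neg_v_pdf hσ μ (by
      have h := tendsto_abs_atTop_atTop (G := ℝ)
      have h2 : Tendsto (fun t : ℝ => t - μ) atTop atTop := tendsto_atTop_add_const_right _ (-μ) tendsto_id
      exact h.comp h2))
  rw [this]; ring

lemma meas_toReal {σ : ℝ} (hσ : 0 < σ) (μ : ℝ) {s : Set ℝ} (hs : MeasurableSet s) :
    ((gaussianReal μ ⟨σ ^ 2, sq_nonneg σ⟩) s).toReal
      = ∫ t in s, gaussianPDFReal μ ⟨σ ^ 2, sq_nonneg σ⟩ t := by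
  rw [gaussianReal_apply_eq_integral _ (v_ne hσ), ENNReal.toReal_ofReal]
  exact integral_nonneg fun x => gaussianPDFReal_nonneg _ _ _

lemma meas_abs_split {σ : ℝ} (hσ : 0 < σ) (μ lam : ℝ) (hlam : 0 < lam) :
    ((gaussianReal μ ⟨σ ^ 2, sq_nonneg σ⟩) {t : ℝ | lam < |t|}).toReal
      = ((gaussianReal μ ⟨σ ^ 2, sq_nonneg σ⟩) (Iio (-lam))).toReal
        + ((gaussianReal μ ⟨σ ^ 2, sq_nonneg σ⟩) (Ici lam)).toReal := by
  set γ := gaussianReal μ ⟨σ ^ 2, sq_nonneg σ⟩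
  have hICI : γ (Ici lam) = γ (Ioi lam) := by
    refine le_antisymm ?_ (measure_mono Ioi_subset_Ici_self)
    have h0 : γ {lam} = 0 := by
      apply gaussianReal_absolutelyContinuous μ (v_ne hσ)
      exact measure_singleton lam
    calc γ (Ici lam) ≤ γ (Ioi lam ∪ {lam}) := measure_mono (by
          intro x hx
          rcases eq_or_lt_of_le (mem_Ici.1 hx) with h | h
          · exact Or.inr (by simp [h.symm])
          · exact Or.inl h)
      _ ≤ γ (Ioi lam) + γ {lam} := measure_union_le _ _
      _ = γ (Ioi lam) := by rw [h0, add_zero]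
  have hset : {t : ℝ | lam < |t|} = Iio (-lam) ∪ Ioi lam := by
    ext t
    simp only [mem_setOf_eq, mem_union, mem_Iio, mem_Ioi, lt_abs]
    constructor
    · rintro (h | h)
      · exact Or.inr h
      · exact Or.inl (by linarith)
    · rintro (h | h)
      · exact Or.inr (by linarith)
      · exact Or.inl h
  have hdisj : Disjoint (Iio (-lam)) (Ioi lam) :=
    (Iic_disjoint_Ioi (by linarith : -lam ≤ lam)).mono Iio_subset_Iic_self le_rfl
  haveI : IsProbabilityMeasure γ := instIsProbabilityMeasureGaussianReal μ ⟨σ ^ 2, sq_nonneg σ⟩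
  rw [hset, measure_union hdisj measurableSet_Ioi, hICI, ENNReal.toReal_add
    (measure_ne_top _ _) (measure_ne_top _ _)]

lemma coeff_eq {σ : ℝ} (hσ : 0 < σ) :
    2 * σ ^ 2 * (Real.sqrt (2 * Real.pi * σ ^ 2))⁻¹ = σ * Real.sqrt (2 / Real.pi) := by
  have hπ : 0 < Real.pi := Real.pi_pos
  have h1 : Real.sqrt (2 * Real.pi * σ ^ 2) = Real.sqrt 2 * Real.sqrt Real.pi * σ := by
    rw [Real.sqrt_mul (by positivity), Real.sqrt_sq hσ.le, Real.sqrt_mul (by norm_num)]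
  have h2 : Real.sqrt (2 / Real.pi) = Real.sqrt 2 / Real.sqrt Real.pi :=
    Real.sqrt_div (by norm_num) _
  have hs2 : Real.sqrt 2 * Real.sqrt 2 = 2 := Real.mul_self_sqrt (by norm_num)
  have hsp : 0 < Real.sqrt Real.pi := Real.sqrt_pos.2 hπ
  have hs2p : 0 < Real.sqrt 2 := Real.sqrt_pos.2 (by norm_num)
  rw [h1, h2]
  field_simp
  linear_combination (-1 : ℝ) * hs2

lemma integral_F' {σ : ℝ} (hσ : 0 < σ) (μ lam : ℝ) (hlam : 0 < lam) :
    ∫ t, (if t < -lam then 2 * (t + lam - μ) else if t < lam then 0 else -2 * (t - lam - μ))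
        ∂(gaussianReal μ ⟨σ ^ 2, sq_nonneg σ⟩)
      = 2 * lam * ((gaussianReal μ ⟨σ ^ 2, sq_nonneg σ⟩) {t : ℝ | lam < |t|}).toReal
        - σ * Real.sqrt (2 / Real.pi) *
            (Real.exp (-(μ + lam) ^ 2 / (2 * σ ^ 2)) + Real.exp (-(μ - lam) ^ 2 / (2 * σ ^ 2))) := by
  set pdf := gaussianPDFReal μ (⟨σ ^ 2, sq_nonneg σ⟩ : ℝ≥0) with hpdf
  rw [hconv_int hσ]
  have hint1 : Integrable (fun t => 2 * (t + lam - μ) * pdf t) volume := by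
    have h := ((integrable_sub_mul_pdf hσ μ).const_mul 2).add
      ((integrable_gaussianPDFReal μ ⟨σ ^ 2, sq_nonneg σ⟩).const_mul (2 * lam))
    exact h.congr (Filter.Eventually.of_forall fun t => by simp only [Pi.add_apply, ← hpdf]; ring)
  have hint2 : Integrable (fun t => -2 * (t - lam - μ) * pdf t) volume := by
    have h := ((integrable_sub_mul_pdf hσ μ).const_mul (-2)).add
      ((integrable_gaussianPDFReal μ ⟨σ ^ 2, sq_nonneg σ⟩).const_mul (2 * lam))
    exact h.congr (Filter.Eventually.of_forall fun t => by simp only [Pi.add_apply, ← hpdf]; ring)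
  have hsplit : (fun t => pdf t *
      (if t < -lam then 2 * (t + lam - μ) else if t < lam then 0 else -2 * (t - lam - μ)))
      = fun t => (Iio (-lam)).indicator (fun t => 2 * (t + lam - μ) * pdf t) t
        + (Ici lam).indicator (fun t => -2 * (t - lam - μ) * pdf t) t := by
    funext t
    by_cases h1 : t < -lam
    · rw [if_pos h1, indicator_of_mem (mem_Iio.2 h1),
        indicator_of_notMem (fun hm => absurd (mem_Ici.1 hm) (not_le.2 (by nlinarith)))]
      ring
    · rw [if_neg h1, indicator_of_notMem (fun hm => h1 (mem_Iio.1 hm))]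
      by_cases h2 : t < lam
      · rw [if_pos h2, indicator_of_notMem (fun hm => absurd (mem_Ici.1 hm) (not_le.2 h2))]
        ring
      · rw [if_neg h2, indicator_of_mem (mem_Ici.2 (not_lt.1 h2))]
        ring
  rw [hsplit, integral_add (hint1.indicator measurableSet_Iio) (hint2.indicator measurableSet_Ici),
    integral_indicator measurableSet_Iio, integral_indicator measurableSet_Ici]
  have e1 : ∫ t in Iio (-lam), 2 * (t + lam - μ) * pdf t
      = 2 * (-σ ^ 2 * pdf (-lam)) + 2 * lam * ((gaussianReal μ ⟨σ ^ 2, sq_nonneg σ⟩) (Iio (-lam))).toReal := by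
    have ha : ∫ t in Iio (-lam), 2 * (t + lam - μ) * pdf t
        = ∫ t in Iio (-lam), (2 * ((t - μ) * pdf t) + 2 * lam * pdf t) := by
      apply setIntegral_congr_fun measurableSet_Iio
      intro t _; ring
    rw [ha, integral_add (((integrable_sub_mul_pdf hσ μ).const_mul 2).integrableOn)
      (((integrable_gaussianPDFReal μ ⟨σ ^ 2, sq_nonneg σ⟩).const_mul (2 * lam)).integrableOn)]
    have hb : ∫ t in Iio (-lam), 2 * ((t - μ) * pdf t) = 2 * ∫ t in Iio (-lam), (t - μ) * pdf t :=
      integral_const_mul _ _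
    have hc : ∫ t in Iio (-lam), (t - μ) * pdf t = ∫ t in Iic (-lam), (t - μ) * pdf t :=
      setIntegral_congr_set Iio_ae_eq_Iic
    have hd : ∫ t in Iio (-lam), 2 * lam * pdf t = 2 * lam * ∫ t in Iio (-lam), pdf t :=
      integral_const_mul _ _
    rw [hb, hc, tail_Iic hσ, hd, meas_toReal hσ μ measurableSet_Iio]
  have e2 : ∫ t in Ici lam, -2 * (t - lam - μ) * pdf t
      = -2 * (σ ^ 2 * pdf lam) + 2 * lam * ((gaussianReal μ ⟨σ ^ 2, sq_nonneg σ⟩) (Ici lam)).toReal := by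
    have ha : ∫ t in Ici lam, -2 * (t - lam - μ) * pdf t
        = ∫ t in Ici lam, (-2 * ((t - μ) * pdf t) + 2 * lam * pdf t) := by
      apply setIntegral_congr_fun measurableSet_Ici
      intro t _; ring
    rw [ha, integral_add (((integrable_sub_mul_pdf hσ μ).const_mul (-2)).integrableOn)
      (((integrable_gaussianPDFReal μ ⟨σ ^ 2, sq_nonneg σ⟩).const_mul (2 * lam)).integrableOn)]
    have hb : ∫ t in Ici lam, -2 * ((t - μ) * pdf t) = -2 * ∫ t in Ici lam, (t - μ) * pdf t :=
      integral_const_mul _ _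
    have hc : ∫ t in Ici lam, (t - μ) * pdf t = ∫ t in Ioi lam, (t - μ) * pdf t :=
      setIntegral_congr_set Ioi_ae_eq_Ici.symm
    have hd : ∫ t in Ici lam, 2 * lam * pdf t = 2 * lam * ∫ t in Ici lam, pdf t :=
      integral_const_mul _ _
    rw [hb, hc, tail_Ioi hσ, hd, meas_toReal hσ μ measurableSet_Ici]
  rw [e1, e2, meas_abs_split hσ μ lam hlam]
  have hp1 : pdf (-lam) = (Real.sqrt (2 * Real.pi * σ ^ 2))⁻¹ * Real.exp (-(μ + lam) ^ 2 / (2 * σ ^ 2)) := by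
    rw [hpdf, pdf_eq]
    congr 1
    ring_nf
  have hp2 : pdf lam = (Real.sqrt (2 * Real.pi * σ ^ 2))⁻¹ * Real.exp (-(μ - lam) ^ 2 / (2 * σ ^ 2)) := by
    rw [hpdf, pdf_eq]
    congr 1
    ring_nf
  rw [hp1, hp2]
  have hco := coeff_eq hσ
  linear_combination (-(Real.exp (-(μ + lam) ^ 2 / (2 * σ ^ 2)) + Real.exp (-(μ - lam) ^ 2 / (2 * σ ^ 2)))) * hco

lemma coord_hasDerivAt {σ : ℝ} (hσ : 0 < σ) (μ lam : ℝ) (hlam : 0 < lam) :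
    HasDerivAt
      (fun l : ℝ => ∫ t : ℝ, (softThresh t l - μ) ^ 2 ∂(gaussianReal μ ⟨σ ^ 2, sq_nonneg σ⟩))
      (2 * lam * ((gaussianReal μ ⟨σ ^ 2, sq_nonneg σ⟩) {t : ℝ | lam < |t|}).toReal
        - σ * Real.sqrt (2 / Real.pi) *
            (Real.exp (-(μ + lam) ^ 2 / (2 * σ ^ 2)) + Real.exp (-(μ - lam) ^ 2 / (2 * σ ^ 2))))
      lam := by
  set γ := gaussianReal μ (⟨σ ^ 2, sq_nonneg σ⟩ : ℝ≥0) with hγ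
  have hmain := hasDerivAt_integral_of_dominated_loc_of_lip (𝕜 := ℝ) (μ := γ)
    (F := fun l t => (softThresh t l - μ) ^ 2)
    (F' := fun t => if t < -lam then 2 * (t + lam - μ) else if t < lam then 0
      else -2 * (t - lam - μ))
    (x₀ := lam) (bound := fun t => 2 * |t| + 2 * |μ|)
    (ball_mem_nhds lam (half_pos hlam))
    (Filter.Eventually.of_forall fun l =>
      (((measurable_st l).sub_const μ).pow_const 2).aestronglyMeasurable)
    ?hFint ?hF'meas ?hlip ?hbound ?hdiff
  · rw [integral_F' hσ μ lam hlam] at hmain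
    exact hmain.2
  case hFint =>
    show Integrable (fun t => (softThresh t lam - μ) ^ 2) γ
    apply integrable_of_le_one_add_sq hσ μ (2 + 2 * μ ^ 2)
    · exact (((measurable_st lam).sub_const μ).pow_const 2).aestronglyMeasurable
    · intro x
      have hb := st_bound (t := x) hlam.le
      have h1 : |softThresh x lam - μ| ≤ |x| + |μ| :=
        (abs_sub _ _).trans (add_le_add hb le_rfl)
      rw [abs_of_nonneg (sq_nonneg _)]
      have h2 : (softThresh x lam - μ) ^ 2 ≤ (|x| + |μ|) ^ 2 := by
        rw [← sq_abs (softThresh x lam - μ)]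
        exact pow_le_pow_left₀ (abs_nonneg _) h1 2
      nlinarith [sq_nonneg (|x| - |μ|), sq_nonneg (|x| * |μ| - 1), sq_abs x, sq_abs μ,
        abs_nonneg x, abs_nonneg μ]
  case hF'meas =>
    apply Measurable.aestronglyMeasurable
    exact Measurable.ite (measurableSet_lt measurable_id measurable_const)
      (((measurable_id.add_const lam).sub_const μ).const_mul 2)
      (Measurable.ite (measurableSet_lt measurable_id measurable_const) measurable_const
        (((measurable_id.sub_const lam).sub_const μ).const_mul (-2)))
  case hlip =>
    apply Filter.Eventually.of_forall
    intro t
    apply LipschitzOnWith.of_dist_le_mul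
    intro x hx y hy
    rw [Real.dist_eq, Real.dist_eq]
    have hx0 : 0 < x := by
      rw [mem_ball, Real.dist_eq] at hx
      have := abs_lt.1 hx
      linarith [this.1]
    have hy0 : 0 < y := by
      rw [mem_ball, Real.dist_eq] at hy
      have := abs_lt.1 hy
      linarith [(abs_lt.1 hy).1]
    have hfact : (softThresh t x - μ) ^ 2 - (softThresh t y - μ) ^ 2
        = (softThresh t x - softThresh t y) * (softThresh t x + softThresh t y - 2 * μ) := by
      ring
    rw [hfact, abs_mul]
    have h1 := st_lip (t := t) hx0 hy0
    have h2 : |softThresh t x + softThresh t y - 2 * μ| ≤ 2 * |t| + 2 * |μ| := by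
      have ha := st_bound (t := t) hx0.le
      have hb := st_bound (t := t) hy0.le
      have := abs_add_le (softThresh t x + softThresh t y) (-(2*μ))
      calc |softThresh t x + softThresh t y - 2 * μ|
          ≤ |softThresh t x + softThresh t y| + |2 * μ| := by
            rw [sub_eq_add_neg]
            simpa [abs_neg] using abs_add_le (softThresh t x + softThresh t y) (-(2*μ))
        _ ≤ |softThresh t x| + |softThresh t y| + |2*μ| := by
            linarith [abs_add_le (softThresh t x) (softThresh t y)]
        _ ≤ 2 * |t| + 2 * |μ| := by
            rw [abs_mul]
            simp only [abs_two]
            linarith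
    have hK : ((Real.nnabs (2 * |t| + 2 * |μ|) : ℝ≥0) : ℝ) = 2 * |t| + 2 * |μ| := by
      rw [Real.coe_nnabs, abs_of_nonneg (by positivity)]
    rw [hK]
    calc |softThresh t x - softThresh t y| * |softThresh t x + softThresh t y - 2 * μ|
        ≤ |x - y| * (2 * |t| + 2 * |μ|) :=
          mul_le_mul h1 h2 (abs_nonneg _) (abs_nonneg _)
      _ = (2 * |t| + 2 * |μ|) * |x - y| := mul_comm _ _
  case hbound =>
    apply integrable_of_le_one_add_sq hσ μ (1 + 2 * |μ|)
    · exact ((measurable_id.abs.const_mul 2).add_const (2 * |μ|)).aestronglyMeasurable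
    · intro x
      rw [abs_of_nonneg (by positivity)]
      nlinarith [sq_nonneg (|x| - 1), abs_nonneg x, abs_nonneg μ, sq_abs x]
  case hdiff =>
    have hae : ∀ᵐ t ∂γ, t ≠ -lam ∧ t ≠ lam := by
      have h0 : γ {-lam, lam} = 0 := by
        apply gaussianReal_absolutelyContinuous μ (v_ne hσ)
        rw [Set.insert_eq]
        exact measure_union_null Real.volume_singleton Real.volume_singleton
      rw [ae_iff]
      refine measure_mono_null ?_ h0
      intro t ht
      simp only [mem_setOf_eq, not_and_or, not_not, ne_eq] at ht
      rcases ht with h | h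
      · exact mem_insert_iff.2 (Or.inl h)
      · exact mem_insert_iff.2 (Or.inr (by simp [h]))
    filter_upwards [hae] with t ht
    rcases lt_trichotomy t (-lam) with h | h | h
    · -- t < -lam
      have hg : HasDerivAt (fun l : ℝ => (t + l - μ) ^ 2) (2 * (t + lam - μ)) lam := by
        have h1 : HasDerivAt (fun l : ℝ => t + l - μ) 1 lam := by
          simpa using ((hasDerivAt_id lam).const_add t).sub_const μ
        have := h1.fun_pow 2
        simpa [mul_comm] using this
      have hev : (fun l : ℝ => (softThresh t l - μ) ^ 2) =ᶠ[𝓝 lam]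
          (fun l : ℝ => (t + l - μ) ^ 2) := by
        filter_upwards [Iio_mem_nhds (show lam < -t by linarith)] with l hl
        have : t ≤ -l := by
          simp only [mem_Iio] at hl
          linarith
        simp [softThresh, this]
      rw [if_pos h]
      exact hg.congr_of_eventuallyEq hev
    · exact absurd h ht.1
    · rcases lt_trichotomy t lam with h2 | h2 | h2
      · -- -lam < t < lam
        have hev : (fun l : ℝ => (softThresh t l - μ) ^ 2) =ᶠ[𝓝 lam]
            (fun _ : ℝ => (0 - μ) ^ 2) := by
          filter_upwards [Ioi_mem_nhds (show |t| < lam from abs_lt.2 ⟨by linarith, h2⟩)] with l hl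
          simp only [mem_Ioi] at hl
          have h3 := abs_lt.1 hl
          have hne : ¬ t ≤ -l := by linarith [(abs_lt.1 hl).1]
          have hlt : t < l := by linarith [(abs_lt.1 hl).2]
          simp [softThresh, hne, hlt]
        rw [if_neg (by linarith), if_pos h2]
        exact (hasDerivAt_const lam ((0 - μ) ^ 2)).congr_of_eventuallyEq hev
      · exact absurd h2 ht.2
      · -- lam < t
        have hg : HasDerivAt (fun l : ℝ => (t - l - μ) ^ 2) (-2 * (t - lam - μ)) lam := by
          have h1 : HasDerivAt (fun l : ℝ => t - l - μ) (-1) lam := by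
            simpa using ((hasDerivAt_id lam).const_sub t).sub_const μ
          have := h1.fun_pow 2
          refine this.congr_deriv ?_
          norm_num <;> ring
        have hev : (fun l : ℝ => (softThresh t l - μ) ^ 2) =ᶠ[𝓝 lam]
            (fun l : ℝ => (t - l - μ) ^ 2) := by
          filter_upwards [Iio_mem_nhds h2, Ioi_mem_nhds hlam] with l hl1 hl2
          simp only [mem_Iio] at hl1
          simp only [mem_Ioi] at hl2
          have hne : ¬ t ≤ -l := by linarith
          have hge : ¬ t < l := by linarith
          simp [softThresh, hne, hge]
        rw [if_neg (by linarith), if_neg (by linarith)]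
        exact hg.congr_of_eventuallyEq hev

end Aux

/-- **Derivative of the soft-thresholding risk.**  For independent `Y_i ~ N((μ0)_i, σ²)`,
the risk `λ ↦ Σ_i E[(ST(Y_i, λ) - (μ0)_i)²]` is differentiable at every `λ > 0` with
derivative `2λ Σ_i P(|Y_i| > λ)
  - σ√(2/π) Σ_i [exp(-((μ0)_i + λ)²/(2σ²)) + exp(-((μ0)_i - λ)²/(2σ²))]`. -/
theorem soft_thresholding_risk_hasDerivAt
    {P : ℕ} (σ : ℝ) (hσ : 0 < σ) (μ0 : Fin P → ℝ) (lam : ℝ) (hlam : 0 < lam) :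
    HasDerivAt
      (fun l : ℝ => ∑ i : Fin P,
        ∫ t : ℝ, (softThresh t l - μ0 i) ^ 2 ∂(gaussianReal (μ0 i) ⟨σ ^ 2, sq_nonneg σ⟩))
      (2 * lam * ∑ i : Fin P,
          ((gaussianReal (μ0 i) ⟨σ ^ 2, sq_nonneg σ⟩) {t : ℝ | lam < |t|}).toReal
        - σ * Real.sqrt (2 / Real.pi) * ∑ i : Fin P,
            (Real.exp (-(μ0 i + lam) ^ 2 / (2 * σ ^ 2))
              + Real.exp (-(μ0 i - lam) ^ 2 / (2 * σ ^ 2))))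
      lam := by
  have h := HasDerivAt.fun_sum (u := Finset.univ) (fun i _ => coord_hasDerivAt hσ (μ0 i) lam hlam)
  have heq : (2 * lam * ∑ i : Fin P,
          ((gaussianReal (μ0 i) ⟨σ ^ 2, sq_nonneg σ⟩) {t : ℝ | lam < |t|}).toReal
        - σ * Real.sqrt (2 / Real.pi) * ∑ i : Fin P,
            (Real.exp (-(μ0 i + lam) ^ 2 / (2 * σ ^ 2))
              + Real.exp (-(μ0 i - lam) ^ 2 / (2 * σ ^ 2))))
      = ∑ i : Fin P,
        (2 * lam * ((gaussianReal (μ0 i) ⟨σ ^ 2, sq_nonneg σ⟩) {t : ℝ | lam < |t|}).toReal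
          - σ * Real.sqrt (2 / Real.pi) *
              (Real.exp (-(μ0 i + lam) ^ 2 / (2 * σ ^ 2))
                + Real.exp (-(μ0 i - lam) ^ 2 / (2 * σ ^ 2)))) := by
    rw [Finset.mul_sum, Finset.mul_sum, ← Finset.sum_sub_distrib]
  rw [heq]
  exact h
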